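/- Let K be twice differentiable and Θ differentiable at a point t, with values defined in a neighborhood of t, and let Υ be a real-valued function. Assume Θ(t) ≠ 0, K(t) ≠ 0, K′(t) ≠ 0, and that the generating relation Θ(t) Θ′(t) = 4 Υ(t) K(t) K′(t) holds at t. Define h₄ := −K² and h₃ := 4 (K′)²/Θ². Then at the point t: h₄″ − (h₄′)²/(2 h₄) − (h₃′ h₄′)/(2 h₃) = 2 h₃ h₄ Υ. (Verification that the generating-function formulas (sol1b)–(sol1c) of Theorem 3.1 solve the vertical equation (eq2b) of the gravitational field equations.) -/

import Mathlib

/- STATEMENT 12: the generating-function formulas h₄ = −K², h₃ = 4(K′)²/Θ²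
of Theorem 3.1 ((sol1b)–(sol1c)) solve the vertical equation (eq2b):
h₄″ − (h₄′)²/(2h₄) − h₃′h₄′/(2h₃) = 2 h₃ h₄ Υ, given the generating relation
Θ Θ′ = 4 Υ K K′. -/

theorem generating_functions_solve_vertical_equation
    (Θ K Υ : ℝ → ℝ) (t : ℝ)
    (hK : ∀ᶠ s in nhds t, DifferentiableAt ℝ K s)
    (hK2 : DifferentiableAt ℝ (deriv K) t)
    (hΘ : DifferentiableAt ℝ Θ t)
    (hΘ0 : Θ t ≠ 0) (hK0 : K t ≠ 0) (hK'0 : deriv K t ≠ 0)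
    (hgen : Θ t * deriv Θ t = 4 * Υ t * K t * deriv K t)
    (h₃ h₄ : ℝ → ℝ)
    (hh₄ : h₄ = fun s => -(K s) ^ 2)
    (hh₃ : h₃ = fun s => 4 * (deriv K s) ^ 2 / (Θ s) ^ 2) :
    deriv (deriv h₄) t - (deriv h₄ t) ^ 2 / (2 * h₄ t)
        - deriv h₃ t * deriv h₄ t / (2 * h₃ t)
      = 2 * h₃ t * h₄ t * Υ t := by
  subst hh₃ hh₄
  have hKt : DifferentiableAt ℝ K t := hK.self_of_nhds
  -- deriv h₄ eventually equals -(2*K*K')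
  have hd4 : (deriv fun s => -(K s) ^ 2) =ᶠ[nhds t]
      fun s => -(2 * K s * deriv K s) := by
    filter_upwards [hK] with s hs
    have h1 : HasDerivAt (fun x => -(K x) ^ 2) (-(2 * K s * deriv K s)) s := by
      have : HasDerivAt (fun x => -(K x) ^ 2) _ s := ((hs.hasDerivAt.pow 2)).neg
      simpa [mul_comm, mul_assoc, mul_left_comm] using this
    exact h1.deriv
  have hd4t : deriv (fun s => -(K s) ^ 2) t = -(2 * K t * deriv K t) :=
    hd4.self_of_nhds
  -- second derivative
  have hd4' : deriv (deriv fun s => -(K s) ^ 2) t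
      = -(2 * (deriv K t * deriv K t + K t * deriv (deriv K) t)) := by
    rw [hd4.deriv_eq]
    have h1 : HasDerivAt (fun s => -(2 * K s * deriv K s))
        (-(2 * (deriv K t * deriv K t + K t * deriv (deriv K) t))) t := by
      have : HasDerivAt (fun s => -(2 * (K s * deriv K s))) _ t :=
        ((hKt.hasDerivAt.mul hK2.hasDerivAt).const_mul 2).neg
      simpa [mul_comm, mul_assoc, mul_left_comm, mul_add] using this
    exact h1.deriv
  -- derivative of h₃
  have hd3 : deriv (fun s => 4 * (deriv K s) ^ 2 / (Θ s) ^ 2) t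
      = (4 * (2 * deriv K t * deriv (deriv K) t) * (Θ t) ^ 2
        - 4 * (deriv K t) ^ 2 * (2 * Θ t * deriv Θ t)) / ((Θ t) ^ 2) ^ 2 := by
    have h1 : HasDerivAt (fun s => 4 * (deriv K s) ^ 2 / (Θ s) ^ 2)
        ((4 * (2 * deriv K t * deriv (deriv K) t) * (Θ t) ^ 2
        - 4 * (deriv K t) ^ 2 * (2 * Θ t * deriv Θ t)) / ((Θ t) ^ 2) ^ 2) t := by
      have hnum : HasDerivAt (fun s => 4 * (deriv K s) ^ 2)
          (4 * (2 * deriv K t * deriv (deriv K) t)) t := by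
        have := (hK2.hasDerivAt.pow 2).const_mul 4
        simpa [mul_comm, mul_assoc, mul_left_comm] using this
      have hden : HasDerivAt (fun s => (Θ s) ^ 2) (2 * Θ t * deriv Θ t) t := by
        have : HasDerivAt (fun s => (Θ s) ^ 2) _ t := hΘ.hasDerivAt.pow 2
        simpa [mul_comm, mul_assoc, mul_left_comm] using this
      exact hnum.div hden (pow_ne_zero 2 hΘ0)
    exact h1.deriv
  rw [hd4', hd4t, hd3]
  have hgen' : deriv Θ t = 4 * Υ t * K t * deriv K t / Θ t := by
    field_simp at hgen ⊢
    linarith [hgen]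
  rw [hgen']
  field_simp
  ring
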